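/- If f belongs to the class 𝓕, then for every z ∈ 𝔻 with |z| = r < 1 one has 1/(1+r)³ ≤ |f'(z)| ≤ 1/(1-r)³. -/

import Mathlib

open Complex Metric MeasureTheory

/-- The class 𝓕 of normalized locally univalent analytic functions on the unit disk
satisfying `Re (1 + z f''(z)/f'(z)) > -1/2`. -/
def IsInClassF (f : ℂ → ℂ) : Prop :=
  AnalyticOnNhd ℂ f (ball (0 : ℂ) 1) ∧ f 0 = 0 ∧ deriv f 0 = 1 ∧
    (∀ z ∈ ball (0 : ℂ) 1, deriv f z ≠ 0) ∧
    (∀ z ∈ ball (0 : ℂ) 1, (1 + z * deriv (deriv f) z / deriv f z).re > -(1/2))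

/-- The `n`-th section (partial sum) `s_n(f)(z) = z + ∑_{k=2}^n a_k z^k`, where
`a_k = f^{(k)}(0)/k!`. -/
noncomputable def sectionF (f : ℂ → ℂ) (n : ℕ) (z : ℂ) : ℂ :=
  ∑ k ∈ Finset.Icc 1 n, (iteratedDeriv k f 0 / (Nat.factorial k)) * z ^ k

/-- Carathéodory-type bound via the Schwarz lemma: if `N` is differentiable on the unit
disk, `N 0 = 0`, and `Re (N u) > -3/2` on the disk, then
`-3|u|/(1+|u|) ≤ Re (N u) ≤ 3|u|/(1-|u|)`. -/
lemma caratheodory_bound (N : ℂ → ℂ) (hN : DifferentiableOn ℂ N (ball 0 1))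
    (hN0 : N 0 = 0) (hNre : ∀ u ∈ ball (0:ℂ) 1, (N u).re > -(3/2)) :
    ∀ u ∈ ball (0:ℂ) 1, -(3 * ‖u‖ / (1 + ‖u‖)) ≤ (N u).re ∧
      (N u).re ≤ 3 * ‖u‖ / (1 - ‖u‖) := by
  set q : ℂ → ℂ := fun u => N u / (3 + N u) with hqdef
  have hden : ∀ u ∈ ball (0:ℂ) 1, 3 + N u ≠ 0 := by
    intro u hu h
    have h1 := hNre u hu
    have : (3 + N u).re = 0 := by rw [h]; simp
    simp only [Complex.add_re] at this
    norm_num at this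
    linarith
  have hqD : DifferentiableOn ℂ q (ball 0 1) :=
    hN.div ((differentiableOn_const _).add hN) hden
  have hq0 : q 0 = 0 := by simp [hqdef, hN0]
  have hmaps : Set.MapsTo q (ball (0:ℂ) 1) (ball (0:ℂ) 1) := by
    intro u hu
    have h1 := hNre u hu
    have h2 := hden u hu
    have habs : ‖N u‖ < ‖3 + N u‖ := by
      have hsq : (‖N u‖)^2 < (‖3 + N u‖)^2 := by
        rw [Complex.sq_norm, Complex.sq_norm, Complex.normSq_apply, Complex.normSq_apply]
        simp only [Complex.add_re, Complex.add_im]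
        norm_num
        nlinarith
      exact lt_of_pow_lt_pow_left₀ 2 (norm_nonneg _) hsq
    rw [mem_ball_zero_iff]
    simp only [hqdef, norm_div]
    rw [div_lt_one (lt_of_le_of_lt (norm_nonneg _) habs)]
    exact habs
  have hschwarz : ∀ u ∈ ball (0:ℂ) 1, ‖q u‖ ≤ ‖u‖ := by
    intro u hu
    have := Complex.dist_le_div_mul_dist_of_mapsTo_ball hqD (by rw [hq0]; exact hmaps.mono_right ball_subset_closedBall) hu
    simpa [hq0, Complex.dist_eq] using this
  intro u hu
  have hq2 := hschwarz u hu
  have hsu : ‖u‖ < 1 := by rwa [mem_ball_zero_iff] at hu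
  set s := ‖u‖ with hs
  have hs0 : 0 ≤ s := norm_nonneg _
  have h2 := hden u hu
  have hq1 : ‖q u‖ < 1 := lt_of_le_of_lt hq2 hsu
  have hqne1 : (1 : ℂ) - q u ≠ 0 := by
    intro h
    have : q u = 1 := by linear_combination -h
    rw [this] at hq1; simp at hq1
  have hNq : N u = 3 * q u / (1 - q u) := by
    field_simp [hqdef]
    have e : q u * (3 + N u) = N u := div_mul_cancel₀ (N u) h2
    linear_combination -e
  have habs1q : 1 - s ≤ ‖1 - q u‖ := by
    have := norm_add_le (1 - q u) (q u)
    simp only [sub_add_cancel, norm_one] at this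
    linarith
  constructor
  · -- lower bound
    have hx := Complex.abs_re_le_norm (q u)
    have hxy : (q u).re ^ 2 + (q u).im ^ 2 ≤ s ^ 2 := by
      have : Complex.normSq (q u) ≤ s ^ 2 := by
        rw [← Complex.sq_norm]
        exact pow_le_pow_left₀ (norm_nonneg _) hq2 2
      rw [Complex.normSq_apply] at this; nlinarith [this]
    have hDn : 0 < Complex.normSq (1 - q u) := Complex.normSq_pos.mpr hqne1
    have hre : (N u).re = 3 * ((q u / (1 - q u)).re) := by
      rw [hNq, mul_div_assoc]
      simp [Complex.mul_re]
    have hxs : -s ≤ (q u).re := by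
      have := abs_le.mp (le_trans hx hq2)
      exact this.1
    rw [hre, Complex.div_re]
    rw [Complex.normSq_apply]
    simp only [Complex.sub_re, Complex.sub_im, Complex.one_re, Complex.one_im]
    set x := (q u).re
    set y := (q u).im
    have hDn' : 0 < (1 - x) * (1 - x) + (0 - y) * (0 - y) := by
      have he : (1 - x) * (1 - x) + (0 - y) * (0 - y) = Complex.normSq (1 - q u) := by
        simp [Complex.normSq_apply, Complex.sub_re, Complex.sub_im, x, y]
      rw [he]; exact hDn
    rw [← add_div, ← mul_div_assoc, neg_le, ← neg_div]
    rw [div_le_div_iff₀ hDn' (by linarith : (0:ℝ) < 1 + s)]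
    nlinarith
  · -- upper bound
    have : (N u).re ≤ ‖N u‖ := Complex.re_le_norm _
    refine le_trans this ?_
    rw [hNq, norm_div, norm_mul]
    have h3 : ‖(3:ℂ)‖ = 3 := by norm_num [Complex.norm_ofNat]
    rw [h3]
    have hnum : 3 * ‖q u‖ ≤ 3 * s := by linarith
    have : 0 < 1 - s := by linarith
    gcongr

theorem deriv_bounds (f : ℂ → ℂ) (hf : IsInClassF f) (z : ℂ) (hz : z ∈ ball (0 : ℂ) 1) :
    1 / (1 + ‖z‖) ^ 3 ≤ ‖deriv f z‖ ∧
    ‖deriv f z‖ ≤ 1 / (1 - ‖z‖) ^ 3 := by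
  obtain ⟨hA, hf0, hd0, hne, hre⟩ := hf
  have hr1 : ‖z‖ < 1 := by rwa [mem_ball_zero_iff] at hz
  set r := ‖z‖ with hrdef
  have hr0 : 0 ≤ r := norm_nonneg _
  set g := deriv f with hgdef
  have hgA : AnalyticOnNhd ℂ g (ball 0 1) := hA.deriv
  set N : ℂ → ℂ := fun u => u * deriv g u / g u with hNdef
  have hND : DifferentiableOn ℂ N (ball 0 1) :=
    (differentiableOn_id.mul hgA.deriv.differentiableOn).div hgA.differentiableOn hne
  have hN0 : N 0 = 0 := by simp [hNdef]
  have hNre : ∀ u ∈ ball (0:ℂ) 1, (N u).re > -(3/2) := by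
    intro u hu
    have h := hre u hu
    have hNu : N u = u * deriv g u / g u := rfl
    rw [hNu]
    simp only [Complex.add_re, Complex.one_re] at h
    linarith
  have hbound := caratheodory_bound N hND hN0 hNre
  -- the path and its membership
  have htz : ∀ t ∈ Set.Icc (0:ℝ) 1, (t:ℂ)*z ∈ ball (0:ℂ) 1 := by
    intro t ht
    rw [mem_ball_zero_iff]
    simp only [norm_mul, Complex.norm_real, Real.norm_eq_abs]
    have h1 : |t| ≤ 1 := abs_le.mpr ⟨by linarith [ht.1], ht.2⟩
    nlinarith [abs_nonneg t]
  set φ : ℝ → ℝ := fun t => (z * deriv g ((t:ℂ)*z) / g ((t:ℂ)*z)).re with hφdef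
  -- FTC: log |f'(z)| = ∫₀¹ φ
  have hL : ∀ t ∈ Set.uIcc (0:ℝ) 1,
      HasDerivAt (fun t : ℝ => Real.log (‖g ((t:ℂ)*z)‖)) (φ t) t := by
    intro t ht
    rw [Set.uIcc_of_le (by norm_num : (0:ℝ) ≤ 1)] at ht
    have htm := htz t ht
    have hgne : g ((t:ℂ)*z) ≠ 0 := hne _ htm
    have h1 : HasDerivAt g (deriv g ((t:ℂ)*z)) ((t:ℂ)*z) :=
      ((hgA _ htm).differentiableAt).hasDerivAt
    have h2 : HasDerivAt (fun w : ℂ => g (w * z)) (deriv g ((t:ℂ)*z) * z) (t:ℂ) := by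
      have := h1.comp (t:ℂ) (hasDerivAt_mul_const z)
      exact this
    set w' : ℂ := deriv g ((t:ℂ)*z) * z with hw'
    have hreD : HasDerivAt (fun t : ℝ => (g ((t:ℂ) * z)).re) w'.re t := h2.real_of_complex
    have himD : HasDerivAt (fun t : ℝ => (g ((t:ℂ) * z)).im) w'.im t := by
      have h3 : HasDerivAt (fun w : ℂ => g (w * z) * (-Complex.I)) (w' * (-Complex.I)) (t:ℂ) :=
        h2.mul_const _
      have := h3.real_of_complex
      simp only [mul_neg, Complex.neg_re, Complex.mul_I_re, neg_neg] at this
      exact this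
    have hnD : HasDerivAt (fun t : ℝ => Complex.normSq (g ((t:ℂ) * z)))
        (2 * ((g ((t:ℂ)*z)).re * w'.re + (g ((t:ℂ)*z)).im * w'.im)) t := by
      have this : HasDerivAt (fun t : ℝ => (g ((t:ℂ)*z)).re * (g ((t:ℂ)*z)).re + (g ((t:ℂ)*z)).im * (g ((t:ℂ)*z)).im) _ t := (hreD.mul hreD).add (himD.mul himD)
      have heq : (fun t : ℝ => (g ((t:ℂ)*z)).re * (g ((t:ℂ)*z)).re
          + (g ((t:ℂ)*z)).im * (g ((t:ℂ)*z)).im) = fun t : ℝ => Complex.normSq (g ((t:ℂ)*z)) := by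
        funext t; rw [Complex.normSq_apply]
      rw [heq] at this
      convert this using 1
      ring
    have hn0 : Complex.normSq (g ((t:ℂ)*z)) ≠ 0 := by
      simpa [Complex.normSq_eq_zero] using hgne
    have hlogD : HasDerivAt (fun t : ℝ => Real.log (Complex.normSq (g ((t:ℂ)*z))) / 2) ((Complex.normSq (g ((t:ℂ)*z)))⁻¹ * (2 * ((g ((t:ℂ)*z)).re * w'.re + (g ((t:ℂ)*z)).im * w'.im)) / 2) t := by
      have := ((Real.hasDerivAt_log hn0).comp t hnD).div_const 2
      exact this
    have heq2 : (fun t : ℝ => Real.log (‖g ((t : ℂ) * z)‖))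
        = fun t : ℝ => Real.log (Complex.normSq (g ((t:ℂ)*z))) / 2 := by
      funext t
      rw [Complex.norm_def, Real.log_sqrt (Complex.normSq_nonneg _)]
    rw [heq2]
    convert hlogD using 1
    have hB : (Complex.normSq (g ((t:ℂ)*z)))⁻¹ *
        (2 * ((g ((t:ℂ)*z)).re * w'.re + (g ((t:ℂ)*z)).im * w'.im)) / 2
        = ((g ((t:ℂ)*z)).re * w'.re + (g ((t:ℂ)*z)).im * w'.im)
          / Complex.normSq (g ((t:ℂ)*z)) := by
      ring
    rw [hB]
    show (z * deriv g ((t:ℂ)*z) / g ((t:ℂ)*z)).re = _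
    rw [Complex.div_re, ← add_div, hw']
    congr 1
    simp only [Complex.mul_re, Complex.mul_im]
    ring
  -- continuity and integrability of φ
  have hφcont : ContinuousOn φ (Set.Icc (0:ℝ) 1) := by
    have hc : ContinuousOn (fun t : ℝ => (t:ℂ)*z) (Set.Icc (0:ℝ) 1) := by fun_prop
    have hmapsI : Set.MapsTo (fun t : ℝ => (t:ℂ)*z) (Set.Icc (0:ℝ) 1) (ball (0:ℂ) 1) :=
      fun t ht => htz t ht
    have hgc : ContinuousOn (fun t : ℝ => g ((t:ℂ)*z)) (Set.Icc (0:ℝ) 1) :=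
      hgA.continuousOn.comp hc hmapsI
    have hdgc : ContinuousOn (fun t : ℝ => deriv g ((t:ℂ)*z)) (Set.Icc (0:ℝ) 1) :=
      hgA.deriv.continuousOn.comp hc hmapsI
    have : ContinuousOn (fun t : ℝ => z * deriv g ((t:ℂ)*z) / g ((t:ℂ)*z))
        (Set.Icc (0:ℝ) 1) := by
      apply ContinuousOn.div (continuousOn_const.mul hdgc) hgc
      intro t ht; exact hne _ (htz t ht)
    exact Complex.continuous_re.comp_continuousOn this
  have hint : IntervalIntegrable φ volume 0 1 := by
    apply ContinuousOn.intervalIntegrable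
    rwa [Set.uIcc_of_le (by norm_num : (0:ℝ) ≤ 1)]
  have hFTC : ∫ t in (0:ℝ)..1, φ t = Real.log (‖g z‖) := by
    rw [intervalIntegral.integral_eq_sub_of_hasDerivAt hL hint]
    have e1 : ((1:ℝ):ℂ) * z = z := by norm_num
    have e0 : ((0:ℝ):ℂ) * z = 0 := by norm_num
    rw [e1, e0, hd0]
    simp
  -- pointwise bounds on φ away from 0
  have hφbnd : ∀ t, t ∈ Set.Icc (0:ℝ) 1 → t ≠ 0 →
      -(3*r/(1+t*r)) ≤ φ t ∧ φ t ≤ 3*r/(1-t*r) := by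
    intro t ht ht0
    have htpos : 0 < t := lt_of_le_of_ne ht.1 (Ne.symm ht0)
    have hmem := htz t ht
    have hb := hbound ((t:ℂ)*z) hmem
    have habs : ‖(t:ℂ)*z‖ = t*r := by
      simp [norm_mul, Complex.norm_real, abs_of_pos htpos, hrdef]
    have htr1 : t * r < 1 := by nlinarith [ht.2]
    have hNt : (N ((t:ℂ)*z)).re = t * φ t := by
      have hNu : N ((t:ℂ)*z) = (t:ℂ) * (z * deriv g ((t:ℂ)*z) / g ((t:ℂ)*z)) := by
        show ((t:ℂ)*z) * deriv g ((t:ℂ)*z) / g ((t:ℂ)*z) = _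
        ring
      rw [hNu, Complex.re_ofReal_mul]
    rw [habs, hNt] at hb
    constructor
    · have h1 := hb.1
      have hd1 : (1 + t*r) ≠ 0 := by positivity
      have he : -(3 * (t*r) / (1 + t*r)) = t * (-(3*r/(1+t*r))) := by
        rw [mul_neg, mul_div_assoc']
        ring_nf
      rw [he] at h1
      exact le_of_mul_le_mul_left h1 htpos
    · have h1 := hb.2
      have hd2 : (1 - t*r) ≠ 0 := by nlinarith
      have he : 3 * (t*r) / (1 - t*r) = t * (3*r/(1-t*r)) := by
        rw [mul_div_assoc']
        ring_nf
      rw [he] at h1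
      exact le_of_mul_le_mul_left h1 htpos
  -- positivity facts
  have h1mr : (0:ℝ) < 1 - r := by linarith
  have h1pr : (0:ℝ) < 1 + r := by linarith
  have hne01 : ∀ t ∈ Set.uIcc (0:ℝ) 1, (0:ℝ) < 1 - t*r := by
    intro t ht
    rw [Set.uIcc_of_le (by norm_num : (0:ℝ) ≤ 1)] at ht
    nlinarith [ht.1, ht.2]
  have hne02 : ∀ t ∈ Set.uIcc (0:ℝ) 1, (0:ℝ) < 1 + t*r := by
    intro t ht
    rw [Set.uIcc_of_le (by norm_num : (0:ℝ) ≤ 1)] at ht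
    nlinarith [ht.1, ht.2]
  -- bound integrands are integrable
  have hcont1 : ContinuousOn (fun t : ℝ => 3*r/(1-t*r)) (Set.uIcc 0 1) := by
    apply ContinuousOn.div continuousOn_const
    · fun_prop
    · intro t ht; exact ne_of_gt (hne01 t ht)
  have hcont2 : ContinuousOn (fun t : ℝ => -(3*r/(1+t*r))) (Set.uIcc 0 1) := by
    apply ContinuousOn.neg
    apply ContinuousOn.div continuousOn_const
    · fun_prop
    · intro t ht; exact ne_of_gt (hne02 t ht)
  have hint1 : IntervalIntegrable (fun t : ℝ => 3*r/(1-t*r)) volume 0 1 :=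
    hcont1.intervalIntegrable
  have hint2 : IntervalIntegrable (fun t : ℝ => -(3*r/(1+t*r))) volume 0 1 :=
    hcont2.intervalIntegrable
  -- integrals of the bounds
  have hI1 : ∫ t in (0:ℝ)..1, 3*r/(1-t*r) = -(3 * Real.log (1-r)) := by
    have hder : ∀ t ∈ Set.uIcc (0:ℝ) 1,
        HasDerivAt (fun t : ℝ => -(3 * Real.log (1-t*r))) (3*r/(1-t*r)) t := by
      intro t ht
      have hpos := hne01 t ht
      have h1 : HasDerivAt (fun t : ℝ => 1 - t*r) (-r) t := by
        simpa using ((hasDerivAt_id t).mul_const r).const_sub 1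
      have h2 := (Real.hasDerivAt_log (ne_of_gt hpos)).comp t h1
      have h3 : HasDerivAt (fun t : ℝ => -(3 * Real.log (1-t*r))) (-(3 * ((1 - t*r)⁻¹ * -r))) t :=
        (HasDerivAt.const_mul (3:ℝ) h2).neg
      convert h3 using 1
      ring
    rw [intervalIntegral.integral_eq_sub_of_hasDerivAt hder hint1]
    simp
  have hI2 : ∫ t in (0:ℝ)..1, -(3*r/(1+t*r)) = -(3 * Real.log (1+r)) := by
    have hder : ∀ t ∈ Set.uIcc (0:ℝ) 1,
        HasDerivAt (fun t : ℝ => -(3 * Real.log (1+t*r))) (-(3*r/(1+t*r))) t := by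
      intro t ht
      have hpos := hne02 t ht
      have h1 : HasDerivAt (fun t : ℝ => 1 + t*r) r t := by
        simpa using ((hasDerivAt_id t).mul_const r).const_add 1
      have h2 := (Real.hasDerivAt_log (ne_of_gt hpos)).comp t h1
      have h3 : HasDerivAt (fun t : ℝ => -(3 * Real.log (1+t*r))) (-(3 * ((1 + t*r)⁻¹ * r))) t :=
        (HasDerivAt.const_mul (3:ℝ) h2).neg
      convert h3 using 1
      ring
    rw [intervalIntegral.integral_eq_sub_of_hasDerivAt hder hint2]
    simp
  -- a.e. comparison
  have hae : ∀ᵐ (t:ℝ) ∂(volume.restrict (Set.Icc (0:ℝ) 1)), t ≠ 0 := by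
    apply MeasureTheory.ae_restrict_of_ae
    rw [MeasureTheory.ae_iff]
    simp [Real.volume_singleton]
  have hmemae : ∀ᵐ (t:ℝ) ∂(volume.restrict (Set.Icc (0:ℝ) 1)), t ∈ Set.Icc (0:ℝ) 1 :=
    MeasureTheory.ae_restrict_mem measurableSet_Icc
  have hup : Real.log (‖g z‖) ≤ -(3 * Real.log (1-r)) := by
    rw [← hFTC, ← hI1]
    apply intervalIntegral.integral_mono_ae_restrict (by norm_num) hint hint1
    filter_upwards [hae, hmemae] with t ht0 htm
    exact (hφbnd t htm ht0).2
  have hlow : -(3 * Real.log (1+r)) ≤ Real.log (‖g z‖) := by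
    rw [← hFTC, ← hI2]
    apply intervalIntegral.integral_mono_ae_restrict (by norm_num) hint2 hint
    filter_upwards [hae, hmemae] with t ht0 htm
    exact (hφbnd t htm ht0).1
  -- conclude by exponentiating
  have habspos : 0 < ‖g z‖ := by
    have := hne z hz
    exact norm_pos_iff.mpr this
  constructor
  · have hmono := Real.exp_le_exp.mpr hlow
    rw [Real.exp_log habspos] at hmono
    have he : Real.exp (-(3*Real.log (1+r))) = 1/(1+r)^3 := by
      have : -(3*Real.log (1+r)) = Real.log (((1+r)^3)⁻¹) := by
        rw [Real.log_inv, Real.log_pow]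
        push_cast; ring
      rw [this, Real.exp_log (by positivity), one_div]
    rw [he] at hmono
    exact hmono
  · have hmono := Real.exp_le_exp.mpr hup
    rw [Real.exp_log habspos] at hmono
    have he : Real.exp (-(3*Real.log (1-r))) = 1/(1-r)^3 := by
      have : -(3*Real.log (1-r)) = Real.log (((1-r)^3)⁻¹) := by
        rw [Real.log_inv, Real.log_pow]
        push_cast; ring
      rw [this, Real.exp_log (by positivity), one_div]
    rw [he] at hmono
    exact hmono
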